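/- arXiv:2101.11403 — 3 statements merged into one kernel-verified Lean document; each statement's English description precedes it below -/
import Mathlib

section
/- Let κ : [0,∞) → ℝ be a continuous, non-positive, decreasing function, and let G solve the ODE G''(t) + κ(t)G(t) = 0 with G(0) = 0, G'(0) = 1. Then G(t) ≥ t for all t ≥ 0. -/
open Set

/-- If `κ : [0,∞) → ℝ` is continuous, non-positive and decreasing, and `G` solves
`G'' + κ G = 0` with `G 0 = 0`, `G' 0 = 1`, then `G t ≥ t` for all `t ≥ 0`. -/
theorem ode_comparison_G_ge_t
    (κ G G' : ℝ → ℝ)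
    (hκcont : ContinuousOn κ (Ici 0))
    (hκnonpos : ∀ t ∈ Ici (0:ℝ), κ t ≤ 0)
    (hκanti : AntitoneOn κ (Ici 0))
    (hG : ∀ t ∈ Ici (0:ℝ), HasDerivAt G (G' t) t)
    (hG' : ∀ t ∈ Ici (0:ℝ), HasDerivAt G' (-(κ t) * G t) t)
    (hG0 : G 0 = 0) (hG'0 : G' 0 = 1) :
    ∀ t ∈ Ici (0:ℝ), t ≤ G t := by
  have hGc : ∀ t ∈ Ici (0:ℝ), ContinuousAt G t := fun t ht => (hG t ht).continuousAt
  have hG'c : ∀ t ∈ Ici (0:ℝ), ContinuousAt G' t := fun t ht => (hG' t ht).continuousAt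
  -- main claim: G' ≥ 1 on [0, t₀] for every t₀ ≥ 0
  have key : ∀ t₀ ∈ Ici (0:ℝ), ∀ s ∈ Icc (0:ℝ) t₀, 1 ≤ G' s := by
    intro t₀ ht₀
    by_contra hcon
    push_neg at hcon
    set S : Set ℝ := {t ∈ Icc (0:ℝ) t₀ | ∀ s ∈ Icc (0:ℝ) t, 1 ≤ G' s} with hSdef
    have h0S : (0:ℝ) ∈ S := by
      refine ⟨⟨le_refl 0, ht₀⟩, ?_⟩
      intro s hs
      have : s = 0 := le_antisymm hs.2 hs.1
      simp [this, hG'0]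
    have hbdd : BddAbove S := ⟨t₀, fun x hx => hx.1.2⟩
    set T := sSup S with hTdef
    have hT0 : 0 ≤ T := le_csSup hbdd h0S
    have hTle : T ≤ t₀ := csSup_le ⟨0, h0S⟩ (fun x hx => hx.1.2)
    have hlt : ∀ s, 0 ≤ s → s < T → 1 ≤ G' s := by
      intro s hs0 hsT
      obtain ⟨u, huS, hsu⟩ := exists_lt_of_lt_csSup ⟨0, h0S⟩ hsT
      exact huS.2 s ⟨hs0, hsu.le⟩
    have hG'T : 1 ≤ G' T := by
      rcases eq_or_lt_of_le hT0 with h | h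
      · rw [← h, hG'0]
      · have hne : (nhdsWithin T (Iio T)).NeBot := nhdsLT_neBot T
        have htend : Filter.Tendsto G' (nhdsWithin T (Iio T)) (nhds (G' T)) :=
          ((hG'c T hT0).continuousWithinAt).tendsto
        refine ge_of_tendsto htend ?_
        have h1 : ∀ᶠ s in nhdsWithin T (Iio T), 0 < s :=
          eventually_nhdsWithin_of_eventually_nhds (eventually_gt_nhds h)
        filter_upwards [h1, self_mem_nhdsWithin] with s hs0 hsT
        exact hlt s hs0.le hsT
    have hTS : T ∈ S := by
      refine ⟨⟨hT0, hTle⟩, ?_⟩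
      intro s hs
      rcases lt_or_eq_of_le hs.2 with h | h
      · exact hlt s hs.1 h
      · rw [h]; exact hG'T
    -- T < t₀
    have hTlt : T < t₀ := by
      rcases lt_or_eq_of_le hTle with h | h
      · exact h
      · exfalso
        obtain ⟨s, hs, hs1⟩ := hcon
        exact absurd (hTS.2 s (h ▸ hs)) (not_le.mpr hs1)
    -- G is monotone on [0,T], so G ≥ 0 there
    have hGmono : MonotoneOn G (Icc 0 T) := by
      apply monotoneOn_of_hasDerivWithinAt_nonneg (f' := G') (convex_Icc 0 T)
      · exact fun x hx => (hGc x hx.1).continuousWithinAt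
      · intro x hx
        rw [interior_Icc] at hx
        exact ((hG x hx.1.le).hasDerivWithinAt)
      · intro x hx
        rw [interior_Icc] at hx
        exact le_trans zero_le_one (hlt x hx.1.le hx.2)
    have hGnonnegT : ∀ s ∈ Icc (0:ℝ) T, 0 ≤ G s := by
      intro s hs
      have := hGmono (left_mem_Icc.mpr hT0) hs hs.1
      rwa [hG0] at this
    -- find ε > 0 with G' > 0 on ball T δ, T + ε ≤ t₀
    have hU : G' ⁻¹' Ioi 0 ∈ nhds T :=
      (hG'c T hT0) (Ioi_mem_nhds (by linarith))
    obtain ⟨δ, hδ0, hδ⟩ := Metric.mem_nhds_iff.mp hU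
    set ε := min (δ / 2) (t₀ - T) with hεdef
    have hε0 : 0 < ε := lt_min (by linarith) (by linarith)
    have hεδ : ε < δ := lt_of_le_of_lt (min_le_left _ _) (by linarith)
    have hεt₀ : T + ε ≤ t₀ := by
      have := min_le_right (δ / 2) (t₀ - T)
      simpa [hεdef] using by linarith [this]
    -- G monotone on [T, T+ε]
    have hGmono2 : MonotoneOn G (Icc T (T + ε)) := by
      apply monotoneOn_of_hasDerivWithinAt_nonneg (f' := G') (convex_Icc T (T + ε))
      · exact fun x hx => (hGc x (le_trans hT0 hx.1)).continuousWithinAt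
      · intro x hx
        rw [interior_Icc] at hx
        exact ((hG x (le_trans hT0 hx.1.le)).hasDerivWithinAt)
      · intro x hx
        rw [interior_Icc] at hx
        have : x ∈ Metric.ball T δ := by
          rw [Metric.mem_ball, Real.dist_eq, abs_lt]
          constructor <;> [linarith [hx.1]; linarith [hx.2]]
        exact (hδ this).le
    -- G ≥ 0 on [0, T+ε]
    have hGnonneg : ∀ s ∈ Icc (0:ℝ) (T + ε), 0 ≤ G s := by
      intro s hs
      rcases le_or_gt s T with h | h
      · exact hGnonnegT s ⟨hs.1, h⟩
      · have := hGmono2 (left_mem_Icc.mpr (by linarith)) ⟨h.le, hs.2⟩ h.le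
        exact le_trans (hGnonnegT T ⟨hT0, le_refl T⟩) this
    -- G' monotone on [0, T+ε]
    have hG'mono : MonotoneOn G' (Icc 0 (T + ε)) := by
      apply monotoneOn_of_hasDerivWithinAt_nonneg (f' := fun x => -(κ x) * G x)
        (convex_Icc 0 (T + ε))
      · exact fun x hx => (hG'c x hx.1).continuousWithinAt
      · intro x hx
        rw [interior_Icc] at hx
        exact ((hG' x hx.1.le).hasDerivWithinAt)
      · intro x hx
        rw [interior_Icc] at hx
        have h1 : 0 ≤ -(κ x) := neg_nonneg.mpr (hκnonpos x hx.1.le)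
        have h2 : 0 ≤ G x := hGnonneg x ⟨hx.1.le, hx.2.le⟩
        exact mul_nonneg h1 h2
    -- hence T + ε ∈ S, contradiction
    have hTεS : T + ε ∈ S := by
      refine ⟨⟨by linarith, hεt₀⟩, ?_⟩
      intro s hs
      have := hG'mono (left_mem_Icc.mpr (by linarith)) hs hs.1
      rwa [hG'0] at this
    have := le_csSup hbdd hTεS
    linarith
  -- conclude: (G x - x) is monotone on [0, t]
  intro t ht
  rcases eq_or_lt_of_le (show (0:ℝ) ≤ t from ht) with h | h
  · rw [← h, hG0]
  · have hmono : MonotoneOn (fun x => G x - x) (Icc 0 t) := by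
      apply monotoneOn_of_hasDerivWithinAt_nonneg (f' := fun x => G' x - 1) (convex_Icc 0 t)
      · intro x hx
        exact ((hGc x hx.1).continuousWithinAt).sub continuousWithinAt_id
      · intro x hx
        rw [interior_Icc] at hx
        exact (((hG x hx.1.le).sub (hasDerivAt_id x)).hasDerivWithinAt)
      · intro x hx
        rw [interior_Icc] at hx
        have := key t ht x ⟨hx.1.le, hx.2.le⟩
        linarith
    have := hmono (left_mem_Icc.mpr ht) (right_mem_Icc.mpr ht) ht
    simp only [hG0] at this
    linarith
end

section
/- Let κ : [0,∞) → ℝ be a continuous, non-positive, decreasing function, and let G solve G''(t) + κ(t)G(t) = 0 with G(0) = 0, G'(0) = 1. Then G(r) ≤ r·exp(r·√(-κ(r))) for all r ≥ 0. -/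
open Set Real

/-- If `κ : [0,∞) → ℝ` is continuous, non-positive and decreasing, and `G` solves
`G'' + κ G = 0` with `G 0 = 0`, `G' 0 = 1`, then `G r ≤ r·exp(r·√(-κ r))` for `r ≥ 0`. -/
theorem ode_upper_bound_G
    (κ G G' : ℝ → ℝ)
    (hκcont : ContinuousOn κ (Ici 0))
    (hκnonpos : ∀ t ∈ Ici (0:ℝ), κ t ≤ 0)
    (hκanti : AntitoneOn κ (Ici 0))
    (hG : ∀ t ∈ Ici (0:ℝ), HasDerivAt G (G' t) t)
    (hG' : ∀ t ∈ Ici (0:ℝ), HasDerivAt G' (-(κ t) * G t) t)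
    (hG0 : G 0 = 0) (hG'0 : G' 0 = 1) :
    ∀ r ∈ Ici (0:ℝ), G r ≤ r * Real.exp (r * Real.sqrt (-κ r)) := by
  intro r hr
  have hr0 : (0:ℝ) ≤ r := hr
  rcases eq_or_lt_of_le hr0 with h0 | hrpos
  · simp [← h0, hG0]
  set K := Real.sqrt (-κ r) with hK
  have hK0 : 0 ≤ K := Real.sqrt_nonneg _
  have hκr : κ r ≤ 0 := hκnonpos r hr
  have hKsq : K * K = -κ r := Real.mul_self_sqrt (by linarith)
  set f : ℝ → ℝ × ℝ := fun t => (K * G t, G' t) with hf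
  have hderiv : ∀ t ∈ Icc (0:ℝ) r, HasDerivAt f (K * G' t, -(κ t) * G t) t := by
    intro t ht
    exact HasDerivAt.prodMk ((hG t ht.1).const_mul K) (hG' t ht.1)
  have key : ∀ t ∈ Icc (0:ℝ) r, ‖f t‖ ≤ gronwallBound 1 K 0 (t - 0) := by
    apply norm_le_gronwallBound_of_norm_deriv_right_le
      (f' := fun t => (K * G' t, -(κ t) * G t))
    · exact fun t ht => (hderiv t ht).continuousAt.continuousWithinAt
    · intro t ht
      exact (hderiv t (Ico_subset_Icc_self ht)).hasDerivWithinAt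
    · simp [hf, hG0, hG'0, Prod.norm_def]
    · intro t ht
      have ht' : t ∈ Icc (0:ℝ) r := Ico_subset_Icc_self ht
      have hκt : κ r ≤ κ t := hκanti ht'.1 hr ht'.2
      have hκt0 : κ t ≤ 0 := hκnonpos t ht'.1
      rw [Prod.norm_def, Prod.norm_def]
      simp only [Real.norm_eq_abs]
      rw [add_zero]
      have h1 : |K * G' t| ≤ K * max |K * G t| |G' t| := by
        rw [abs_mul, abs_of_nonneg hK0]
        exact mul_le_mul_of_nonneg_left (le_max_right _ _) hK0
      have h2 : |(-(κ t)) * G t| ≤ K * max |K * G t| |G' t| := by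
        rw [abs_mul]
        have hκabs : |(-(κ t))| ≤ K * K := by
          rw [abs_of_nonneg (by linarith), hKsq]; linarith
        calc |(-(κ t))| * |G t| ≤ (K * K) * |G t| :=
              mul_le_mul_of_nonneg_right hκabs (abs_nonneg _)
          _ = K * |K * G t| := by
              rw [abs_mul, abs_of_nonneg hK0]; ring
          _ ≤ K * max |K * G t| |G' t| :=
              mul_le_mul_of_nonneg_left (le_max_left _ _) hK0
      exact max_le h1 h2
  have hG'bound : ∀ t ∈ Icc (0:ℝ) r, |G' t| ≤ Real.exp (K * r) := by
    intro t ht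
    have := key t ht
    rw [gronwallBound_ε0, sub_zero, one_mul] at this
    have h1 : |G' t| ≤ ‖f t‖ := by
      rw [Prod.norm_def]; simp only [Real.norm_eq_abs]
      exact le_max_right _ _
    have h2 : Real.exp (K * t) ≤ Real.exp (K * r) :=
      Real.exp_le_exp.2 (mul_le_mul_of_nonneg_left ht.2 hK0)
    linarith
  have hmvt : ‖G r - G 0‖ ≤ Real.exp (K * r) * ‖r - (0:ℝ)‖ := by
    apply Convex.norm_image_sub_le_of_norm_hasDerivWithin_le
      (f' := G') (s := Icc (0:ℝ) r)
      (fun t ht => (hG t ht.1).hasDerivWithinAt)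
      (fun t ht => hG'bound t ht) (convex_Icc _ _)
      (left_mem_Icc.2 hr0) (right_mem_Icc.2 hr0)
  rw [hG0, sub_zero, sub_zero, Real.norm_eq_abs, Real.norm_eq_abs,
    abs_of_nonneg hr0] at hmvt
  calc G r ≤ |G r| := le_abs_self _
    _ ≤ Real.exp (K * r) * r := hmvt
    _ = r * Real.exp (r * K) := by ring_nf
end

section
/- Let T : (0,∞) → ℝ be a strictly positive, nondecreasing C¹ function, let γ > 0 satisfy T(γ) ≥ e, and let φ : [e,∞) → (0,∞) be nondecreasing with c_φ := ∫_e^∞ dt/(t·φ(t)) < ∞. Then the set of r ≥ γ for which T'(r) > T(r)·φ(T(r)) has Lebesgue measure at most c_φ. -/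
open Set Real MeasureTheory

/-- Borel growth lemma: if `T` is positive, nondecreasing and `C¹` on `(0,∞)`,
`T γ ≥ e` for some `γ > 0`, and `φ` is positive nondecreasing on `[e,∞)` with
`c_φ = ∫_e^∞ dt/(t φ t) < ∞`, then the set of `r ≥ γ` where `T' r > T r · φ (T r)`
has Lebesgue measure at most `c_φ`. -/
theorem borel_growth_lemma
    (T T' φ : ℝ → ℝ) (γ : ℝ)
    (hT : ∀ r ∈ Ioi (0:ℝ), HasDerivAt T (T' r) r)
    (hT'cont : ContinuousOn T' (Ioi 0))
    (hTpos : ∀ r ∈ Ioi (0:ℝ), 0 < T r)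
    (hTmono : MonotoneOn T (Ioi 0))
    (hγ : 0 < γ) (hTγ : Real.exp 1 ≤ T γ)
    (hφpos : ∀ t ∈ Ici (Real.exp 1), 0 < φ t)
    (hφmono : MonotoneOn φ (Ici (Real.exp 1)))
    (hφint : IntegrableOn (fun t => 1 / (t * φ t)) (Ici (Real.exp 1))) :
    volume {r : ℝ | γ ≤ r ∧ T r * φ (T r) < T' r}
      ≤ ENNReal.ofReal (∫ t in Ici (Real.exp 1), 1 / (t * φ t)) := by
  set e : ℝ := Real.exp 1 with he_def
  have he0 : (0:ℝ) < e := Real.exp_pos 1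
  set f : ℝ → ℝ := fun t => 1 / (t * φ t) with hf_def
  set E : Set ℝ := {r : ℝ | γ ≤ r ∧ T r * φ (T r) < T' r} with hE_def
  -- basic facts about T
  have hmaxpos : ∀ r : ℝ, (0:ℝ) < max r γ := fun r => lt_of_lt_of_le hγ (le_max_right r γ)
  have hTge : ∀ r, γ ≤ r → e ≤ T r := fun r hr =>
    hTγ.trans (hTmono (mem_Ioi.mpr hγ) (mem_Ioi.mpr (lt_of_lt_of_le hγ hr)) hr)
  have hf_nonneg : ∀ t ∈ Ici e, 0 ≤ f t := by
    intro t ht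
    have ht0 : 0 < t := lt_of_lt_of_le he0 ht
    have := hφpos t ht
    positivity
  -- interval integrability of f on [a,b] ⊆ [e,∞)
  have hf_ii : ∀ a b : ℝ, e ≤ a → e ≤ b → IntervalIntegrable f volume a b := by
    intro a b ha hb
    have hsub : uIcc a b ⊆ Ici e := fun x hx => le_trans (le_min ha hb) hx.1
    exact (hφint.mono_set hsub).intervalIntegrable
  -- the primitive g
  set g : ℝ → ℝ := fun t => ∫ s in e..t, f s with hg_def
  have hg_sub : ∀ a b : ℝ, e ≤ a → e ≤ b → g b - g a = ∫ s in a..b, f s := by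
    intro a b ha hb
    exact intervalIntegral.integral_interval_sub_left (hf_ii e b le_rfl hb) (hf_ii e a le_rfl ha)
  have hg_mono : ∀ a b : ℝ, e ≤ a → a ≤ b → g a ≤ g b := by
    intro a b ha hab
    have : 0 ≤ g b - g a := by
      rw [hg_sub a b ha (ha.trans hab)]
      exact intervalIntegral.integral_nonneg hab (fun u hu => hf_nonneg u (ha.trans hu.1))
    linarith
  have hg_nonneg : ∀ t, e ≤ t → 0 ≤ g t := by
    intro t ht
    have h0 : g e = 0 := intervalIntegral.integral_same
    have := hg_mono e t le_rfl ht
    linarith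
  have hg_le : ∀ t, e ≤ t → g t ≤ ∫ s in Ici e, f s := by
    intro t ht
    have h1 : g t = ∫ s in Ioc e t, f s := intervalIntegral.integral_of_le ht
    rw [h1]
    refine setIntegral_mono_set hφint ?_ ?_
    · exact (ae_restrict_iff' measurableSet_Ici).mpr (ae_of_all _ hf_nonneg)
    · exact HasSubset.Subset.eventuallyLE (fun x hx => le_of_lt hx.1)
  -- monotone function G
  set G : ℝ → ℝ := fun r => g (T (max r γ)) with hG_def
  have hTmax_e : ∀ r : ℝ, e ≤ T (max r γ) := fun r => hTge _ (le_max_right r γ)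
  have hGmono : Monotone G := by
    intro r1 r2 h12
    exact hg_mono _ _ (hTmax_e r1)
      (hTmono (mem_Ioi.mpr (hmaxpos r1)) (mem_Ioi.mpr (hmaxpos r2))
        (max_le_max h12 le_rfl))
  -- extended φ
  set ψ : ℝ → ℝ := fun t => φ (max t e) with hψ_def
  have hψmono : Monotone ψ := by
    intro t1 t2 h12
    exact hφmono (mem_Ici.mpr (le_max_right _ _)) (mem_Ici.mpr (le_max_right _ _)) (max_le_max h12 le_rfl)
  have hψeq : ∀ t, e ≤ t → ψ t = φ t := fun t ht => by simp [hψ_def, max_eq_left ht]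
  -- continuity of r ↦ T (max r γ) and T' (max r γ)
  have hmaxcont : Continuous fun r : ℝ => max r γ := continuous_id.max continuous_const
  have hmaxmem : ∀ r : ℝ, max r γ ∈ Ioi (0:ℝ) := fun r => mem_Ioi.mpr (hmaxpos r)
  have hTcontOn : ContinuousOn T (Ioi 0) := fun r hr =>
    ((hT r hr).continuousAt).continuousWithinAt
  have hTMc : Continuous fun r : ℝ => T (max r γ) :=
    hTcontOn.comp_continuous hmaxcont hmaxmem
  have hT'Mc : Continuous fun r : ℝ => T' (max r γ) :=
    hT'cont.comp_continuous hmaxcont hmaxmem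
  -- measurability of E
  have hEmeas : MeasurableSet E := by
    have hEeq : E = Ici γ ∩ {r : ℝ | T (max r γ) * ψ (T (max r γ)) < T' (max r γ)} := by
      ext r
      simp only [hE_def, mem_setOf_eq, mem_inter_iff, mem_Ici]
      constructor
      · rintro ⟨h1, h2⟩
        refine ⟨h1, ?_⟩
        rw [max_eq_left h1, hψeq _ (hTge r h1)]
        exact h2
      · rintro ⟨h1, h2⟩
        rw [max_eq_left h1, hψeq _ (hTge r h1)] at h2
        exact ⟨h1, h2⟩
    rw [hEeq]
    exact measurableSet_Ici.inter
      (measurableSet_lt (hTMc.measurable.mul ((hψmono.measurable).comp hTMc.measurable))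
        hT'Mc.measurable)
  -- injectivity of T on D
  set D : Set ℝ := {r : ℝ | γ < r ∧ 0 < T' r} with hD_def
  have haux : ∀ a b : ℝ, a ∈ D → γ < b → a < b → T a ≠ T b := by
    intro a b ha hb hab heq
    have ha0 : (0:ℝ) < a := hγ.trans ha.1
    have hslope : Filter.Tendsto (slope T a) (nhdsWithin a (Ioi a)) (nhds (T' a)) :=
      (hasDerivAt_iff_tendsto_slope.mp (hT a (mem_Ioi.mpr ha0))).mono_left
        (nhdsWithin_mono _ (fun y hy => ne_of_gt hy))
    have hpos : ∀ᶠ y in nhdsWithin a (Ioi a), 0 < slope T a y :=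
      hslope.eventually (eventually_gt_nhds ha.2)
    have hzero : ∀ᶠ y in nhdsWithin a (Ioi a), slope T a y = 0 := by
      filter_upwards [Ioo_mem_nhdsGT_of_mem ⟨le_refl a, hab⟩] with y hy
      have hy0 : (0:ℝ) < y := ha0.trans hy.1
      have h1 : T a ≤ T y := hTmono (mem_Ioi.mpr ha0) (mem_Ioi.mpr hy0) hy.1.le
      have h2 : T y ≤ T b := hTmono (mem_Ioi.mpr hy0) (mem_Ioi.mpr (hγ.trans hb)) hy.2.le
      have : T y = T a := le_antisymm (heq ▸ h2) h1
      simp [slope_def_field, this]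
    obtain ⟨y, hy1, hy2⟩ := (hpos.and hzero).exists
    rw [hy2] at hy1; exact lt_irrefl 0 hy1
  have hinj : Set.InjOn T D := by
    intro a ha b hb heq
    by_contra hne
    rcases Ne.lt_or_gt hne with h | h
    · exact haux a b ha hb.1 h heq
    · exact haux b a hb ha.1 h heq.symm
  -- countable bad set
  set C : Set ℝ := {t : ℝ | ¬ ContinuousAt ψ t} with hC_def
  have hCcount : C.Countable := hψmono.countable_not_continuousAt
  set N : Set ℝ := D ∩ T ⁻¹' C with hN_def
  have hNcount : N.Countable := by
    refine MapsTo.countable_of_injOn ?_ (hinj.mono inter_subset_left) hCcount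
    intro r hr; exact hr.2
  -- the Stieltjes measure
  set μ := hGmono.stieltjesFunction.measure with hμ_def
  -- main a.e. claim
  have key : ∀ᵐ r, r ∈ E → (1:ENNReal) ≤ μ.rnDeriv volume r := by
    filter_upwards [hGmono.ae_hasDerivAt, hNcount.ae_notMem volume,
      (Set.countable_singleton γ).ae_notMem volume] with r hder hN hγne hrE
    have hrγ : γ < r := lt_of_le_of_ne hrE.1 (fun h => hγne (by simp [h.symm]))
    have hr0 : (0:ℝ) < r := hγ.trans hrγ
    have hTr_e : e ≤ T r := hTge r hrE.1
    have hTr0 : (0:ℝ) < T r := he0.trans_le hTr_e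
    have hφTr : 0 < φ (T r) := hφpos _ hTr_e
    have hT'pos : 0 < T' r := lt_trans (by positivity) hrE.2
    have hrD : r ∈ D := ⟨hrγ, hT'pos⟩
    have hψcont : ContinuousAt ψ (T r) := by
      by_contra hc
      exact hN ⟨hrD, hc⟩
    -- reduce to toReal inequality
    by_cases htop : μ.rnDeriv volume r = ⊤
    · rw [htop]; exact le_top
    suffices hsuff : (1:ℝ) ≤ (μ.rnDeriv volume r).toReal by
      have h1 : (1:ENNReal) = ENNReal.ofReal (1:ℝ) := by simp
      rw [h1, ← ENNReal.ofReal_toReal htop]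
      exact ENNReal.ofReal_le_ofReal hsuff
    set d : ℝ := (μ.rnDeriv volume r).toReal with hd_def
    -- slope of G tends to d from the right
    have hGslope : Filter.Tendsto (slope G r) (nhdsWithin r (Ioi r)) (nhds d) :=
      (hasDerivAt_iff_tendsto_slope.mp hder).mono_left
        (nhdsWithin_mono _ (fun y hy => ne_of_gt hy))
    -- lower bound function
    set L : ℝ → ℝ := fun y => slope T r y * (1 / (T y * ψ (T y))) with hL_def
    -- tendsto of L
    have hTtend : Filter.Tendsto T (nhdsWithin r (Ioi r)) (nhds (T r)) :=
      ((hT r (mem_Ioi.mpr hr0)).continuousAt.continuousWithinAt)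
    have hTslope : Filter.Tendsto (slope T r)
        (nhdsWithin r (Ioi r)) (nhds (T' r)) :=
      (hasDerivAt_iff_tendsto_slope.mp (hT r (mem_Ioi.mpr hr0))).mono_left
        (nhdsWithin_mono _ (fun y (hy : y ∈ Ioi r) => ne_of_gt hy))
    have hψTtend : Filter.Tendsto (fun y => ψ (T y)) (nhdsWithin r (Ioi r))
        (nhds (φ (T r))) := by
      have := (hψcont.tendsto).comp hTtend
      rwa [hψeq _ hTr_e] at this
    have hden_ne : T r * φ (T r) ≠ 0 := by positivity
    have hLtend : Filter.Tendsto L (nhdsWithin r (Ioi r))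
        (nhds (T' r * (1 / (T r * φ (T r))))) := by
      exact hTslope.mul (tendsto_const_nhds.div (hTtend.mul hψTtend) hden_ne)
    -- L ≤ slope G r eventually
    have hev : ∀ᶠ y in nhdsWithin r (Ioi r), L y ≤ slope G r y := by
      filter_upwards [self_mem_nhdsWithin] with y hy
      have hry : r < y := hy
      have hyγ : γ ≤ y := (hrγ.trans hry).le
      have hy0 : (0:ℝ) < y := hr0.trans hry
      have hTy_e : e ≤ T y := hTge y hyγ
      have hTy0 : (0:ℝ) < T y := he0.trans_le hTy_e
      have hφTy : 0 < φ (T y) := hφpos _ hTy_e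
      have hTrTy : T r ≤ T y := hTmono (mem_Ioi.mpr hr0) (mem_Ioi.mpr hy0) hry.le
      have hGy : G y = g (T y) := by simp [hG_def, max_eq_left hyγ]
      have hGr : G r = g (T r) := by simp [hG_def, max_eq_left hrE.1]
      have hconst : ∀ s ∈ Icc (T r) (T y), 1 / (T y * φ (T y)) ≤ f s := by
        intro s hs
        have hs_e : e ≤ s := hTr_e.trans hs.1
        have hs0 : (0:ℝ) < s := he0.trans_le hs_e
        have hφs : 0 < φ s := hφpos _ hs_e
        have hmul : s * φ s ≤ T y * φ (T y) :=
          mul_le_mul hs.2 (hφmono hs_e hTy_e hs.2) hφs.le hTy0.le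
        exact one_div_le_one_div_of_le (by positivity) hmul
      have hint : (T y - T r) * (1 / (T y * φ (T y))) ≤ ∫ s in (T r)..(T y), f s := by
        have h := intervalIntegral.integral_mono_on hTrTy intervalIntegrable_const
          (hf_ii _ _ hTr_e hTy_e) hconst
        rwa [intervalIntegral.integral_const, smul_eq_mul] at h
      have hdiff : G y - G r = ∫ s in (T r)..(T y), f s := by
        rw [hGy, hGr]; exact hg_sub _ _ hTr_e hTy_e
      have hyr0 : (0:ℝ) < y - r := sub_pos.mpr hry
      have hLy : L y = ((T y - T r) * (1 / (T y * φ (T y)))) / (y - r) := by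
        simp only [hL_def]
        rw [slope_def_field, hψeq _ hTy_e]
        ring
      rw [hLy, slope_def_field, hdiff]
      exact (div_le_div_iff_of_pos_right hyr0).mpr (by linarith)
    have hle : T' r * (1 / (T r * φ (T r))) ≤ d :=
      le_of_tendsto_of_tendsto hLtend hGslope hev
    have h1 : (1:ℝ) ≤ T' r * (1 / (T r * φ (T r))) := by
      rw [mul_one_div, le_div_iff₀ (by positivity), one_mul]
      exact hrE.2.le
    linarith
  -- total mass bound
  have hμuniv : μ univ ≤ ENNReal.ofReal (∫ s in Ici e, f s) := by
    have hIoc : ∀ a b : ℝ, μ (Ioc a b) ≤ ENNReal.ofReal (∫ s in Ici e, f s) := by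
      intro a b
      rw [hμ_def, StieltjesFunction.measure_Ioc]
      apply ENNReal.ofReal_le_ofReal
      have h1 : hGmono.stieltjesFunction b ≤ G (b + 1) := hGmono.rightLim_le (lt_add_one b)
      have h2 : G a ≤ hGmono.stieltjesFunction a := hGmono.le_rightLim le_rfl
      have h3 : G (b + 1) ≤ ∫ s in Ici e, f s := hg_le _ (hTmax_e (b + 1))
      have h4 : 0 ≤ G a := hg_nonneg _ (hTmax_e a)
      have : hGmono.stieltjesFunction b - hGmono.stieltjesFunction a ≤ G (b+1) - G a := by
        exact sub_le_sub h1 h2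
      linarith
    have hmono : Monotone (fun n : ℕ => Ioc (-(n:ℝ)) (n:ℝ)) := by
      intro m n hmn
      exact Ioc_subset_Ioc (neg_le_neg (Nat.cast_le.mpr hmn)) (Nat.cast_le.mpr hmn)
    have htend := tendsto_measure_iUnion_atTop (μ := μ) hmono
    have huniv : (⋃ n : ℕ, Ioc (-(n:ℝ)) (n:ℝ)) = univ := by
      apply eq_univ_of_forall
      intro x
      obtain ⟨n, hn⟩ := exists_nat_gt |x|
      refine mem_iUnion.mpr ⟨n, ?_⟩
      constructor
      · have : -(n:ℝ) < -|x| := neg_lt_neg hn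
        exact this.trans_le (neg_abs_le x)
      · exact (le_abs_self x).trans hn.le
    rw [huniv] at htend
    exact le_of_tendsto' htend (fun n => hIoc _ _)
  -- conclusion
  calc volume E = ∫⁻ _ in E, 1 := (setLIntegral_one E).symm
    _ ≤ ∫⁻ r in E, μ.rnDeriv volume r :=
        lintegral_mono_ae ((ae_restrict_iff' hEmeas).mpr key)
    _ ≤ μ E := Measure.setLIntegral_rnDeriv_le E
    _ ≤ μ univ := measure_mono (subset_univ E)
    _ ≤ ENNReal.ofReal (∫ s in Ici e, f s) := hμuniv
end
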